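/- Let θ ∈ (π/4, π/2) and define h*(z) = (1 + z² − 2cos θ √(z² − sin²θ))/sin²θ − 2 and h₊*(z) = (1 + z² + 2cos θ √(z² − sin²θ))/sin²θ − 2 for z ≥ sin θ. With F_γ = I + γ v₁ ⊗ v₁^⊥ and v₃ as above, for every γ ∈ ℝ one has h*(|F_γ v₃|) ≤ γ² ≤ h₊*(|F_γ v₃|). -/

import Mathlib

noncomputable section

def dot2 (a b : Fin 2 → ℝ) : ℝ := a 0 * b 0 + a 1 * b 1

def norm2 (a : Fin 2 → ℝ) : ℝ := Real.sqrt (dot2 a a)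

def perp (a : Fin 2 → ℝ) : Fin 2 → ℝ := ![-(a 1), a 0]

theorem stmt14 (θ : ℝ) (hθ : θ ∈ Set.Ioo (Real.pi/4) (Real.pi/2))
    (v₁ v₂ : Fin 2 → ℝ) (hv₁ : norm2 v₁ = 1) (hv₂ : norm2 v₂ = 1)
    (hangle : dot2 v₁ v₂ = Real.cos (2*θ))
    (hright : dot2 (perp v₁) v₂ = Real.sin (2*θ))
    (v₃ : Fin 2 → ℝ) (hv₃ : v₃ = fun i => -(v₁ i + v₂ i) / norm2 (fun j => v₁ j + v₂ j))
    (hstar hplus : ℝ → ℝ)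
    (hhstar : hstar = fun z =>
      (1 + z^2 - 2 * Real.cos θ * Real.sqrt (z^2 - Real.sin θ ^ 2)) / Real.sin θ ^ 2 - 2)
    (hhplus : hplus = fun z =>
      (1 + z^2 + 2 * Real.cos θ * Real.sqrt (z^2 - Real.sin θ ^ 2)) / Real.sin θ ^ 2 - 2)
    (γ : ℝ) (Fγ : Matrix (Fin 2) (Fin 2) ℝ)
    (hFγ : Fγ = 1 + γ • Matrix.vecMulVec v₁ (perp v₁)) :
    hstar (norm2 (Fγ.mulVec v₃)) ≤ γ^2 ∧ γ^2 ≤ hplus (norm2 (Fγ.mulVec v₃)) := by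
  obtain ⟨hθ1, hθ2⟩ := hθ
  set s := Real.sin θ with hsdef
  set c := Real.cos θ with hcdef
  have hpi4 : 0 < Real.pi / 4 := by positivity
  have hs : 0 < s := Real.sin_pos_of_pos_of_lt_pi (by linarith) (by linarith [Real.pi_pos])
  have hc : 0 < c := Real.cos_pos_of_mem_Ioo ⟨by linarith [Real.pi_pos], hθ2⟩
  have hsc : s^2 + c^2 = 1 := Real.sin_sq_add_cos_sq θ
  have h1 : dot2 v₁ v₁ = 1 := Real.sqrt_eq_one.mp hv₁
  have h2 : dot2 v₂ v₂ = 1 := Real.sqrt_eq_one.mp hv₂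
  have hcos2 : dot2 v₁ v₂ = 2*c^2 - 1 := by rw [hangle, Real.cos_two_mul]
  have hsin2' : dot2 (perp v₁) v₂ = 2*s*c := by rw [hright, Real.sin_two_mul]
  have hsin2 : -(v₁ 1) * v₂ 0 + v₁ 0 * v₂ 1 = 2*s*c := by
    have := hsin2'
    unfold dot2 perp at this
    simpa using this
  have hNd : dot2 (fun j => v₁ j + v₂ j) (fun j => v₁ j + v₂ j) = (2*c)^2 := by
    show (v₁ 0 + v₂ 0) * (v₁ 0 + v₂ 0) + (v₁ 1 + v₂ 1) * (v₁ 1 + v₂ 1) = (2*c)^2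
    unfold dot2 at h1 h2 hcos2
    linear_combination h1 + h2 + 2 * hcos2
  have hN : norm2 (fun j => v₁ j + v₂ j) = 2*c := by
    unfold norm2
    rw [hNd, Real.sqrt_sq (by linarith)]
  have hNne : (2*c : ℝ) ≠ 0 := by positivity
  rw [hN] at hv₃
  have hw : Fγ.mulVec v₃ = fun i => v₃ i + (γ * dot2 (perp v₁) v₃) * v₁ i := by
    subst hFγ
    funext i
    simp [Matrix.mulVec, Matrix.vecMulVec, dot2, perp, Matrix.one_apply, Fin.sum_univ_two,
      dotProduct]
    fin_cases i <;> simp <;> ring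
  have hpd : dot2 (perp v₁) v₃ = -s := by
    rw [hv₃]
    show -(v₁ 1) * (-(v₁ 0 + v₂ 0)/(2*c)) + v₁ 0 * (-(v₁ 1 + v₂ 1)/(2*c)) = -s
    field_simp
    linear_combination -hsin2
  have hv1d : dot2 v₁ v₃ = -c := by
    rw [hv₃]
    show v₁ 0 * (-(v₁ 0 + v₂ 0)/(2*c)) + v₁ 1 * (-(v₁ 1 + v₂ 1)/(2*c)) = -c
    unfold dot2 at h1 hcos2
    field_simp
    linear_combination -h1 - hcos2
  have hv3d : dot2 v₃ v₃ = 1 := by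
    rw [hv₃]
    show (-(v₁ 0 + v₂ 0)/(2*c)) * (-(v₁ 0 + v₂ 0)/(2*c)) + (-(v₁ 1 + v₂ 1)/(2*c)) * (-(v₁ 1 + v₂ 1)/(2*c)) = 1
    unfold dot2 at h1 h2 hcos2
    field_simp
    linear_combination h1 + h2 + 2*hcos2
  have hexp : ∀ k : ℝ, dot2 (fun i => v₃ i + k * v₁ i) (fun i => v₃ i + k * v₁ i)
      = dot2 v₃ v₃ + 2*k*(dot2 v₁ v₃) + k^2 * dot2 v₁ v₁ := by
    intro k; unfold dot2; ring
  have hdw : dot2 (Fγ.mulVec v₃) (Fγ.mulVec v₃) = 1 + 2*γ*s*c + γ^2*s^2 := by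
    rw [hw, hexp, hpd, hv1d, hv3d, h1]
    ring
  have h0 : (0:ℝ) ≤ 1 + 2*γ*s*c + γ^2*s^2 := by nlinarith [sq_nonneg (c + γ*s), hsc]
  have hz2 : (norm2 (Fγ.mulVec v₃))^2 = 1 + 2*γ*s*c + γ^2*s^2 := by
    unfold norm2
    rw [hdw, Real.sq_sqrt h0]
  have hsq : Real.sqrt ((norm2 (Fγ.mulVec v₃))^2 - s^2) = |c + γ*s| := by
    have h : (norm2 (Fγ.mulVec v₃))^2 - s^2 = (c + γ*s)^2 := by
      rw [hz2]; linear_combination -hsc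
    rw [h, Real.sqrt_sq_eq_abs]
  have hs2 : (0:ℝ) < s^2 := by positivity
  have habs1 : c + γ*s ≤ |c + γ*s| := le_abs_self _
  have habs2 : -(c + γ*s) ≤ |c + γ*s| := neg_le_abs _
  rw [hhstar, hhplus]
  simp only
  rw [hsq, hz2]
  have key1 : c * (c + γ*s) ≤ c * |c + γ*s| := mul_le_mul_of_nonneg_left habs1 hc.le
  have key2 : c * (-(c + γ*s)) ≤ c * |c + γ*s| := mul_le_mul_of_nonneg_left habs2 hc.le
  clear_value s c
  clear hw hdw hexp hNd hN hv₃ hFγ hz2 hsq hpd hv1d hv3d h1 h2 hcos2 hsin2 hsin2'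
    hangle hright hv₁ hv₂ hhstar hhplus hNne h0 hsdef hcdef
  constructor
  · rw [sub_le_iff_le_add, div_le_iff₀ hs2]
    nlinarith [key1, hsc]
  · rw [le_sub_iff_add_le, le_div_iff₀ hs2]
    nlinarith [key2, hsc]
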